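/- Let M ∈ ℝ^{n×n} be symmetric positive definite, A ∈ ℝ^{n×n} arbitrary, and let B ∈ ℝ^{m×n} have full row rank m. Then there exists τ₀ > 0 such that for all τ with 0 < τ < τ₀, the matrix (1/τ)·M + A ∈ ℝ^{n×n} is invertible and the matrix S_A := B·((1/τ)·M + A)⁻¹·Bᵀ ∈ ℝ^{m×m} is invertible. -/

import Mathlib

open Matrix

private lemma dot_self_nonneg {k : ℕ} (x : Fin k → ℝ) : 0 ≤ x ⬝ᵥ x :=
  Finset.sum_nonneg fun i _ => mul_self_nonneg _

private lemma dot_self_pos {k : ℕ} {x : Fin k → ℝ} (hx : x ≠ 0) : 0 < x ⬝ᵥ x := by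
  obtain ⟨i, hi⟩ := Function.ne_iff.mp hx
  exact lt_of_lt_of_le (mul_self_pos.mpr (by simpa using hi))
    (Finset.single_le_sum (fun j _ => mul_self_nonneg (x j)) (Finset.mem_univ i))

/-- A real matrix with positive quadratic form is invertible. -/
private lemma isUnit_of_posQF {k : ℕ} (C : Matrix (Fin k) (Fin k) ℝ)
    (h : ∀ x : Fin k → ℝ, x ≠ 0 → 0 < x ⬝ᵥ C *ᵥ x) : IsUnit C := by
  rw [← Matrix.mulVec_injective_iff_isUnit]
  intro x y hxy
  by_contra hne
  have hx : x - y ≠ 0 := sub_ne_zero.mpr hne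
  have h2 := h _ hx
  rw [Matrix.mulVec_sub, hxy, sub_self, dotProduct_zero] at h2
  exact lt_irrefl 0 h2

/-- The inverse of a real matrix with positive quadratic form also has positive
quadratic form. -/
private lemma posQF_inv {k : ℕ} (C : Matrix (Fin k) (Fin k) ℝ)
    (h : ∀ x : Fin k → ℝ, x ≠ 0 → 0 < x ⬝ᵥ C *ᵥ x) :
    ∀ x : Fin k → ℝ, x ≠ 0 → 0 < x ⬝ᵥ C⁻¹ *ᵥ x := by
  intro x hx
  have hC : IsUnit C := isUnit_of_posQF C h
  set w := C⁻¹ *ᵥ x with hw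
  have hCw : C *ᵥ w = x := by
    rw [hw, Matrix.mulVec_mulVec, Matrix.mul_nonsing_inv C
      (Matrix.isUnit_iff_isUnit_det C |>.mp hC), Matrix.one_mulVec]
  have hwne : w ≠ 0 := by
    intro h0
    rw [h0, Matrix.mulVec_zero] at hCw
    exact hx hCw.symm
  calc 0 < w ⬝ᵥ C *ᵥ w := h w hwne
    _ = (C *ᵥ w) ⬝ᵥ w := dotProduct_comm _ _
    _ = x ⬝ᵥ w := by rw [hCw]

/-- Coercivity: a positive definite real matrix dominates a positive multiple of the
identity quadratic form. -/
private lemma exists_coercive {k : ℕ} (M : Matrix (Fin k) (Fin k) ℝ) (hM : M.PosDef) :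
    ∃ c : ℝ, 0 < c ∧ ∀ x : Fin k → ℝ, c * (x ⬝ᵥ x) ≤ x ⬝ᵥ M *ᵥ x := by
  have hMq : ∀ x : Fin k → ℝ, x ≠ 0 → 0 < x ⬝ᵥ M *ᵥ x := by
    intro x hx
    simpa using hM.dotProduct_mulVec_pos hx
  rcases Nat.eq_zero_or_pos k with hk | hk
  · refine ⟨1, one_pos, fun x => ?_⟩
    subst hk
    simp [dotProduct, Finset.univ_eq_empty]
  · -- the unit sphere is compact and nonempty
    set S : Set (Fin k → ℝ) := {x | x ⬝ᵥ x = 1} with hS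
    have hcont : Continuous fun x : Fin k → ℝ => x ⬝ᵥ x := by
      unfold dotProduct
      exact continuous_finset_sum _ fun i _ => (continuous_apply i).mul (continuous_apply i)
    have hcontM : Continuous fun x : Fin k → ℝ => x ⬝ᵥ M *ᵥ x := by
      unfold dotProduct Matrix.mulVec
      exact continuous_finset_sum _ fun i _ => (continuous_apply i).mul
        (continuous_finset_sum _ fun j _ => (continuous_const.mul (continuous_apply j)))
    have hSclosed : IsClosed S := isClosed_eq hcont continuous_const
    have hSbdd : Bornology.IsBounded S := by
      apply Bornology.IsBounded.subset (Metric.isBounded_closedBall (x := (0 : Fin k → ℝ)) (r := 1))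
      intro x hx
      simp only [Metric.mem_closedBall, dist_zero_right]
      rw [pi_norm_le_iff_of_nonneg zero_le_one]
      intro i
      rw [Real.norm_eq_abs, abs_le_one_iff_mul_self_le_one]
      calc x i * x i ≤ x ⬝ᵥ x :=
            Finset.single_le_sum (fun j _ => mul_self_nonneg (x j)) (Finset.mem_univ i)
        _ = 1 := hx
    have hScompact : IsCompact S := Metric.isCompact_of_isClosed_isBounded hSclosed hSbdd
    have hSne : S.Nonempty := by
      refine ⟨Pi.single ⟨0, hk⟩ 1, ?_⟩
      simp [hS, dotProduct, Pi.single_apply]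
    obtain ⟨x₀, hx₀S, hx₀min⟩ := hScompact.exists_isMinOn hSne hcontM.continuousOn
    have hx₀ne : x₀ ≠ 0 := by
      intro h0
      rw [h0] at hx₀S
      simp [hS, dotProduct] at hx₀S
    refine ⟨x₀ ⬝ᵥ M *ᵥ x₀, hMq x₀ hx₀ne, fun x => ?_⟩
    by_cases hx : x = 0
    · simp [hx]
    · set t : ℝ := Real.sqrt (x ⬝ᵥ x) with ht
      have hst : 0 < x ⬝ᵥ x := dot_self_pos hx
      have htpos : 0 < t := Real.sqrt_pos.mpr hst
      have ht2 : t * t = x ⬝ᵥ x := Real.mul_self_sqrt (le_of_lt hst)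
      set y : Fin k → ℝ := t⁻¹ • x with hy
      have hyS : y ∈ S := by
        show y ⬝ᵥ y = 1
        rw [hy, smul_dotProduct, dotProduct_smul, smul_eq_mul, smul_eq_mul]
        field_simp [ht2]
        rw [sq, ht2]
      have hyq : y ⬝ᵥ M *ᵥ y = t⁻¹ * t⁻¹ * (x ⬝ᵥ M *ᵥ x) := by
        rw [hy, Matrix.mulVec_smul, smul_dotProduct, dotProduct_smul,
          smul_eq_mul, smul_eq_mul]
        ring
      have hmin : x₀ ⬝ᵥ M *ᵥ x₀ ≤ y ⬝ᵥ M *ᵥ y := hx₀min hyS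
      rw [hyq] at hmin
      have := mul_le_mul_of_nonneg_left hmin (le_of_lt (mul_pos htpos htpos))
      calc (x₀ ⬝ᵥ M *ᵥ x₀) * (x ⬝ᵥ x) = (t * t) * (x₀ ⬝ᵥ M *ᵥ x₀) := by rw [ht2]; ring
        _ ≤ (t * t) * (t⁻¹ * t⁻¹ * (x ⬝ᵥ M *ᵥ x)) := this
        _ = x ⬝ᵥ M *ᵥ x := by field_simp
/-- For `M` symmetric positive definite, `A` arbitrary and `B` of full row rank, there exists
`τ₀ > 0` such that for all `0 < τ < τ₀` the matrix `(1/τ)M + A` is invertible and the SIMPLE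
Schur complement `S_A = B ((1/τ)M + A)⁻¹ Bᵀ` is invertible. -/
theorem simple_schur_complement_invertible (n m : ℕ)
    (M A : Matrix (Fin n) (Fin n) ℝ) (B : Matrix (Fin m) (Fin n) ℝ)
    (hM : M.PosDef) (hB : B.rank = m) :
    ∃ τ₀ : ℝ, 0 < τ₀ ∧ ∀ τ : ℝ, 0 < τ → τ < τ₀ →
      IsUnit ((1 / τ) • M + A) ∧
      IsUnit (B * ((1 / τ) • M + A)⁻¹ * Bᵀ) := by
  obtain ⟨c, hc, hcoer⟩ := exists_coercive M hM
  -- bound on the quadratic form of A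
  set K : ℝ := ∑ i, ∑ j, |A i j| with hK
  have hK0 : 0 ≤ K := Finset.sum_nonneg fun i _ => Finset.sum_nonneg fun j _ => abs_nonneg _
  have hAbound : ∀ x : Fin n → ℝ, |x ⬝ᵥ A *ᵥ x| ≤ K * (x ⬝ᵥ x) := by
    intro x
    have hsq : ∀ i : Fin n, x i * x i ≤ x ⬝ᵥ x := fun i =>
      Finset.single_le_sum (fun j _ => mul_self_nonneg (x j)) (Finset.mem_univ i)
    have habs : ∀ i j : Fin n, |x i| * |x j| ≤ x ⬝ᵥ x := by
      intro i j
      nlinarith [hsq i, hsq j, sq_nonneg (|x i| - |x j|), abs_nonneg (x i), abs_nonneg (x j),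
        sq_abs (x i), sq_abs (x j)]
    calc |x ⬝ᵥ A *ᵥ x| = |∑ i, x i * ∑ j, A i j * x j| := rfl
      _ ≤ ∑ i, |x i * ∑ j, A i j * x j| := Finset.abs_sum_le_sum_abs _ _
      _ ≤ ∑ i, ∑ j, |A i j| * (x ⬝ᵥ x) := by
          apply Finset.sum_le_sum
          intro i _
          calc |x i * ∑ j, A i j * x j| = |x i| * |∑ j, A i j * x j| := abs_mul _ _
            _ ≤ |x i| * ∑ j, |A i j * x j| :=
                mul_le_mul_of_nonneg_left (Finset.abs_sum_le_sum_abs _ _) (abs_nonneg _)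
            _ = ∑ j, |x i| * (|A i j| * |x j|) := by
                rw [Finset.mul_sum]; congr 1; ext j; rw [abs_mul]
            _ ≤ ∑ j, |A i j| * (x ⬝ᵥ x) := by
                apply Finset.sum_le_sum
                intro j _
                calc |x i| * (|A i j| * |x j|) = |A i j| * (|x i| * |x j|) := by ring
                  _ ≤ |A i j| * (x ⬝ᵥ x) :=
                      mul_le_mul_of_nonneg_left (habs i j) (abs_nonneg _)
      _ = K * (x ⬝ᵥ x) := by rw [hK]; simp [Finset.sum_mul]
  -- injectivity of Bᵀ
  have hBT : Function.Injective (Bᵀ).mulVec := by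
    rw [Matrix.mulVec_injective_iff, Matrix.col_transpose]
    rw [linearIndependent_iff_card_eq_finrank_span]
    have : Set.finrank ℝ (Set.range B.row) = B.rank :=
      (Matrix.rank_eq_finrank_span_row B).symm
    rw [this, hB, Fintype.card_fin]
  refine ⟨c / (K + 1), div_pos hc (by linarith), fun τ hτ hττ => ?_⟩
  set C := (1 / τ) • M + A with hC
  -- the quadratic form of C is positive
  have hCq : ∀ x : Fin n → ℝ, x ≠ 0 → 0 < x ⬝ᵥ C *ᵥ x := by
    intro x hx
    have hs : 0 < x ⬝ᵥ x := dot_self_pos hx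
    have hexp : x ⬝ᵥ C *ᵥ x = (1 / τ) * (x ⬝ᵥ M *ᵥ x) + x ⬝ᵥ A *ᵥ x := by
      rw [hC, Matrix.add_mulVec, dotProduct_add, Matrix.smul_mulVec,
        dotProduct_smul, smul_eq_mul]
    rw [hexp]
    have hcτ : K + 1 < c / τ := by
      rw [lt_div_iff₀ hτ]
      have := (lt_div_iff₀ (show (0:ℝ) < K + 1 by linarith)).mp hττ
      linarith
    have h1 : c * (x ⬝ᵥ x) ≤ x ⬝ᵥ M *ᵥ x := hcoer x
    have h2 : -(K * (x ⬝ᵥ x)) ≤ x ⬝ᵥ A *ᵥ x := neg_le_of_abs_le (hAbound x)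
    have h3 : (1 / τ) * (c * (x ⬝ᵥ x)) ≤ (1 / τ) * (x ⬝ᵥ M *ᵥ x) :=
      mul_le_mul_of_nonneg_left h1 (by positivity)
    have heq : (1 / τ) * (c * (x ⬝ᵥ x)) = (c / τ) * (x ⬝ᵥ x) := by ring
    have hlt : (K + 1) * (x ⬝ᵥ x) < (c / τ) * (x ⬝ᵥ x) :=
      mul_lt_mul_of_pos_right hcτ hs
    nlinarith [h3, h2, hlt, heq]
  have hCunit : IsUnit C := isUnit_of_posQF C hCq
  refine ⟨hCunit, ?_⟩
  apply isUnit_of_posQF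
  intro y hy
  set z : Fin n → ℝ := Bᵀ *ᵥ y with hz
  have hzne : z ≠ 0 := by
    intro h0
    apply hy
    apply hBT
    rw [← hz, h0, Matrix.mulVec_zero]
  have hinvq := posQF_inv C hCq z hzne
  have hexp : y ⬝ᵥ (B * C⁻¹ * Bᵀ) *ᵥ y = z ⬝ᵥ C⁻¹ *ᵥ z := by
    rw [← Matrix.mulVec_mulVec, ← Matrix.mulVec_mulVec, hz, Matrix.dotProduct_mulVec y B,
      ← Matrix.mulVec_transpose]
  rwa [hexp]
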